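/- Let f : E → ℝ be differentiable, L-smooth, and μ-strongly convex with 0 < μ ≤ L, let g : E → ℝ be convex and continuous, let 0 < λ ≤ 1/L, and let x* ∈ E be a global minimizer of F = f + g. Let x : ℕ → E be a sequence such that for every k, x_{k+1} is a global minimizer over y ∈ E of y ↦ (1/(2λ))·‖y - (x_k - λ·∇f(x_k))‖² + g(y). Then for every n ≥ 1, F(x_n) - F(x*) ≤ (1 + λμ/4)^{-n}·(F(x_0) - F(x*)). -/

import Mathlib

open RealInnerProductSpace

set_option maxHeartbeats 1000000

private lemma limit_helper (a b e : ℝ) (h : ∀ t : ℝ, 0 < t → t < 1 → a ≤ b + t * e) :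
    a ≤ b := by
  by_contra hc
  push_neg at hc
  have hδ : 0 < a - b := by linarith
  have h2 := h (1/2) (by norm_num) (by norm_num)
  have he : 0 < e := by nlinarith
  have ht : 0 < (a - b) / (2 * e) := by positivity
  have ht1 : (a - b) / (2 * e) < 1 := by
    rw [div_lt_one (by linarith)]; nlinarith
  have h3 := h _ ht ht1
  have h4 : (a - b) / (2 * e) * e = (a - b) / 2 := by field_simp
  rw [h4] at h3
  linarith

private lemma combo_norm_sq {E : Type*} [NormedAddCommGroup E] [InnerProductSpace ℝ E]
    (A B : E) (t : ℝ) :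
    ‖t • A + (1 - t) • B‖ ^ 2 =
      t * ‖A‖ ^ 2 + (1 - t) * ‖B‖ ^ 2 - t * (1 - t) * ‖A - B‖ ^ 2 := by
  rw [norm_add_sq_real, real_inner_smul_left, real_inner_smul_right, norm_sub_sq_real,
    norm_smul, norm_smul, Real.norm_eq_abs, Real.norm_eq_abs, mul_pow, mul_pow, sq_abs, sq_abs]
  ring

private lemma strong_combo {E : Type*} [NormedAddCommGroup E] [InnerProductSpace ℝ E]
    (f : E → ℝ) (f' : E → E) (μ : ℝ)
    (hstrong : ∀ x y, f x + ⟪f' x, y - x⟫ + (μ / 2) * ‖y - x‖ ^ 2 ≤ f y)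
    (p q : E) (t : ℝ) (ht0 : 0 ≤ t) (ht1 : t ≤ 1) :
    f (t • p + (1 - t) • q) ≤
      t * f p + (1 - t) * f q - μ / 2 * (t * (1 - t)) * ‖p - q‖ ^ 2 := by
  set z := t • p + (1 - t) • q with hz
  have hp : p - z = (1 - t) • (p - q) := by rw [hz]; module
  have hq : q - z = (-t) • (p - q) := by rw [hz]; module
  have h1 := hstrong z p
  have h2 := hstrong z q
  rw [hp, real_inner_smul_right, norm_smul, Real.norm_eq_abs, mul_pow, sq_abs] at h1
  rw [hq, real_inner_smul_right, norm_smul, Real.norm_eq_abs, mul_pow, sq_abs] at h2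
  nlinarith [mul_le_mul_of_nonneg_left h1 ht0,
    mul_le_mul_of_nonneg_left h2 (by linarith : (0:ℝ) ≤ 1 - t)]

private lemma descent_lemma {E : Type*} [NormedAddCommGroup E] [InnerProductSpace ℝ E]
    [CompleteSpace E]
    (f : E → ℝ) (f' : E → E) (L : ℝ) (hL : 0 < L)
    (hdiff : ∀ x, HasGradientAt f (f' x) x)
    (hsmooth : ∀ x y, ‖f' x - f' y‖ ≤ L * ‖x - y‖)
    (x y : E) : f y ≤ f x + ⟪f' x, y - x⟫ + L / 2 * ‖y - x‖ ^ 2 := by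
  set v := y - x with hv
  have hcomp : ∀ t : ℝ, HasDerivAt (fun s : ℝ => f (x + s • v)) ⟪f' (x + t • v), v⟫ t := by
    intro t
    have h1 : HasDerivAt (fun s : ℝ => x + s • v) v t := by
      simpa using ((hasDerivAt_id t).smul_const v).const_add x
    have h3 := ((hdiff (x + t • v)).hasFDerivAt).comp_hasDerivAt t h1
    exact h3
  set φt : ℝ → ℝ := fun t => f (x + t • v) - t * ⟪f' x, v⟫ - L / 2 * ‖v‖ ^ 2 * t ^ 2 with hφt
  have hφ : ∀ t : ℝ,
      HasDerivAt φt (⟪f' (x + t • v), v⟫ - ⟪f' x, v⟫ - L * ‖v‖ ^ 2 * t) t := by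
    intro t
    have ha := ((hcomp t).sub ((hasDerivAt_id t).mul_const ⟪f' x, v⟫)).sub
      ((hasDerivAt_pow 2 t).const_mul (L / 2 * ‖v‖ ^ 2))
    convert ha using 1
    · rfl
    · rfl
    · rfl
    push_cast
    ring
  have hanti : AntitoneOn φt (Set.Icc (0:ℝ) 1) := by
    apply antitoneOn_of_deriv_nonpos (convex_Icc 0 1)
    · exact fun t _ => (hφ t).continuousAt.continuousWithinAt
    · exact fun t ht => ((hφ t).differentiableAt).differentiableWithinAt
    · intro t ht
      rw [interior_Icc] at ht
      rw [(hφ t).deriv]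
      have h4 := hsmooth (x + t • v) x
      have h5 : ‖x + t • v - x‖ = t * ‖v‖ := by
        rw [add_sub_cancel_left, norm_smul, Real.norm_eq_abs, abs_of_pos ht.1]
      rw [h5] at h4
      have h6 := real_inner_le_norm (f' (x + t • v) - f' x) v
      rw [inner_sub_left] at h6
      have h7 := mul_le_mul_of_nonneg_right h4 (norm_nonneg v)
      have h8 : L * (t * ‖v‖) * ‖v‖ = L * ‖v‖ ^ 2 * t := by ring
      linarith [h6, h7, h8]
  have hfinal := hanti (Set.mem_Icc.2 ⟨le_refl 0, zero_le_one⟩)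
    (Set.mem_Icc.2 ⟨zero_le_one, le_refl 1⟩) zero_le_one
  have h0 : φt 0 = f x := by simp [hφt]
  have h1 : φt 1 = f y - ⟪f' x, v⟫ - L / 2 * ‖v‖ ^ 2 := by
    simp [hφt, hv]
  rw [h0, h1] at hfinal
  linarith

theorem prox_gd_strongly_convex_convergence {E : Type*} [NormedAddCommGroup E]
    [InnerProductSpace ℝ E] [CompleteSpace E]
    (f g : E → ℝ) (f' : E → E) (L μ : ℝ) (hμ : 0 < μ) (hμL : μ ≤ L)
    (hdiff : ∀ x, HasGradientAt f (f' x) x)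
    (hsmooth : ∀ x y, ‖f' x - f' y‖ ≤ L * ‖x - y‖)
    (hstrong : ∀ x y, f x + ⟪f' x, y - x⟫ + (μ / 2) * ‖y - x‖ ^ 2 ≤ f y)
    (hgconv : ConvexOn ℝ Set.univ g) (hgcont : Continuous g)
    (lam : ℝ) (hlam : 0 < lam) (hlamL : lam ≤ 1 / L)
    (F : E → ℝ) (hF : F = fun y => f y + g y)
    (xstar : E) (hmin : ∀ y, F xstar ≤ F y)
    (x : ℕ → E)
    (hiter : ∀ k, ∀ y : E,
      (1 / (2 * lam)) * ‖x (k + 1) - (x k - lam • f' (x k))‖ ^ 2 + g (x (k + 1)) ≤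
        (1 / (2 * lam)) * ‖y - (x k - lam • f' (x k))‖ ^ 2 + g y) :
    ∀ n : ℕ, 1 ≤ n →
      F (x n) - F xstar ≤ (1 + lam * μ / 4)⁻¹ ^ n * (F (x 0) - F xstar) := by
  have hL : 0 < L := lt_of_lt_of_le hμ hμL
  set m : ℝ := lam * μ with hm
  have hm0 : 0 < m := mul_pos hlam hμ
  have hlamL' : lam * L ≤ 1 := by
    rw [le_div_iff₀ hL] at hlamL; exact hlamL
  have hm1 : m ≤ 1 := le_trans (by nlinarith) hlamL'
  set c : ℝ := 1 / (2 * lam) with hc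
  have hc0 : 0 < c := by positivity
  -- quadratic growth at the minimizer
  have hgrow : ∀ u : E, μ / 2 * ‖u - xstar‖ ^ 2 ≤ F u - F xstar := by
    intro u
    apply limit_helper _ _ (μ / 2 * ‖u - xstar‖ ^ 2)
    intro t ht0 ht1
    have hcombo := strong_combo f f' μ hstrong u xstar t ht0.le ht1.le
    have hgc := hgconv.2 (Set.mem_univ u) (Set.mem_univ xstar) ht0.le
      (by linarith : (0:ℝ) ≤ 1 - t) (by ring)
    have hmin' := hmin (t • u + (1 - t) • xstar)
    simp only [smul_eq_mul] at hgc
    simp only [hF] at hmin' hcombo hgc ⊢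
    have hsum : t * ((1 - t) * (μ / 2 * ‖u - xstar‖ ^ 2)) ≤
        t * (f u + g u - (f xstar + g xstar)) := by linarith
    have hdivided := le_of_mul_le_mul_left hsum ht0
    linarith
  -- strong prox inequality
  have hprox : ∀ k (y : E),
      c * ‖x (k + 1) - (x k - lam • f' (x k))‖ ^ 2 + g (x (k + 1))
        + c * ‖y - x (k + 1)‖ ^ 2
      ≤ c * ‖y - (x k - lam • f' (x k))‖ ^ 2 + g y := by
    intro k y
    set b := x (k + 1) with hb
    set w := x k - lam • f' (x k) with hw
    apply limit_helper _ _ (c * ‖y - b‖ ^ 2)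
    intro s hs0 hs1
    set t : ℝ := 1 - s with hts
    have ht0 : 0 < t := by rw [hts]; linarith
    have ht1 : t < 1 := by rw [hts]; linarith
    have hzt : (t • b + (1 - t) • y) - w = t • (b - w) + (1 - t) • (y - w) := by module
    have hiterz := hiter k (t • b + (1 - t) • y)
    have hnorm : ‖(t • b + (1 - t) • y) - w‖ ^ 2 =
        t * ‖b - w‖ ^ 2 + (1 - t) * ‖y - w‖ ^ 2 - t * (1 - t) * ‖b - y‖ ^ 2 := by
      rw [hzt, combo_norm_sq]
      have : (b - w) - (y - w) = b - y := by abel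
      rw [this]
    have hgc := hgconv.2 (Set.mem_univ b) (Set.mem_univ y) ht0.le
      (by linarith : (0:ℝ) ≤ 1 - t) (by ring)
    simp only [smul_eq_mul] at hgc
    rw [hnorm] at hiterz
    -- hiterz : c*‖b-w‖² + g b ≤ c*(t‖b-w‖² + (1-t)‖y-w‖² - t(1-t)‖b-y‖²) + g(z_t)
    -- combine with hgc and divide by (1-t)
    have h1t : (0:ℝ) < 1 - t := by linarith
    have hdiv : c * ‖b - w‖ ^ 2 + g b ≤ c * ‖y - w‖ ^ 2 + g y - c * t * ‖b - y‖ ^ 2 := by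
      have hsum : (1 - t) * (c * ‖b - w‖ ^ 2 + g b) ≤
          (1 - t) * (c * ‖y - w‖ ^ 2 + g y - c * t * ‖b - y‖ ^ 2) := by
        nlinarith [hiterz, hgc]
      exact le_of_mul_le_mul_left (by linarith [hsum]) h1t
    have hrev : ‖b - y‖ = ‖y - b‖ := norm_sub_rev b y
    rw [hrev] at hdiv
    rw [hts] at hdiv
    nlinarith [hdiv]
  -- descent with step bound
  have hdesc : ∀ a bb : E, f bb ≤ f a + ⟪f' a, bb - a⟫ + c * ‖bb - a‖ ^ 2 := by
    intro a bb
    have h1 := descent_lemma f f' L hL hdiff hsmooth a bb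
    have h2 : L / 2 ≤ c := by
      rw [hc, le_div_iff₀ (by linarith : (0:ℝ) < 2 * lam)]
      nlinarith
    nlinarith [sq_nonneg ‖bb - a‖, h1, mul_le_mul_of_nonneg_right h2 (sq_nonneg ‖bb - a‖)]
  -- key inequality
  have hkey : ∀ k (y : E), F (x (k + 1)) + c * ‖y - x (k + 1)‖ ^ 2 ≤
      F y + (c - μ / 2) * ‖y - x k‖ ^ 2 := by
    intro k y
    set a := x k with ha
    set b := x (k + 1) with hb
    have hexp : ∀ u : E, ‖u - (a - lam • f' a)‖ ^ 2 =
        ‖u - a‖ ^ 2 + 2 * lam * ⟪f' a, u - a⟫ + lam ^ 2 * ‖f' a‖ ^ 2 := by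
      intro u
      have h1 : u - (a - lam • f' a) = (u - a) + lam • f' a := by module
      rw [h1, norm_add_sq_real, real_inner_smul_right, real_inner_comm, norm_smul,
        Real.norm_eq_abs, mul_pow, sq_abs]
      ring
    have hp := hprox k y
    rw [hexp b, hexp y] at hp
    have e1 : ∀ u : E, c * (‖u - a‖ ^ 2 + 2 * lam * ⟪f' a, u - a⟫ + lam ^ 2 * ‖f' a‖ ^ 2)
        = c * ‖u - a‖ ^ 2 + ⟪f' a, u - a⟫ + c * lam ^ 2 * ‖f' a‖ ^ 2 := by
      intro u
      rw [hc]
      field_simp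
    rw [e1 b, e1 y] at hp
    have hd := hdesc a b
    have hs := hstrong a y
    simp only [hF]
    linarith [hp, hd, hs]
  -- per-step contraction
  have hstep : ∀ k, (1 + m / 4) * (F (x (k + 1)) - F xstar) ≤ F (x k) - F xstar := by
    intro k
    set a := x k with ha
    set b := x (k + 1) with hb
    set t : ℝ := m / (2 - m) with ht
    have h2m : (0:ℝ) < 2 - m := by linarith
    have ht0 : 0 < t := by positivity
    have ht1 : t ≤ 1 := by rw [ht, div_le_one h2m]; linarith
    set y := t • xstar + (1 - t) • a with hy
    have hFy : F y ≤ t * F xstar + (1 - t) * F a := by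
      have hfc := strong_combo f f' μ hstrong xstar a t ht0.le ht1
      have hgc := hgconv.2 (Set.mem_univ xstar) (Set.mem_univ a) ht0.le
        (by linarith : (0:ℝ) ≤ 1 - t) (by ring)
      simp only [smul_eq_mul] at hgc
      have hμterm : 0 ≤ μ / 2 * (t * (1 - t)) * ‖xstar - a‖ ^ 2 :=
        mul_nonneg (mul_nonneg (by linarith) (mul_nonneg ht0.le (by linarith))) (sq_nonneg _)
      simp only [hF, hy]
      linarith [hfc, hgc, hμterm]
    have hya : ‖y - a‖ ^ 2 = t ^ 2 * ‖a - xstar‖ ^ 2 := by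
      have h1 : y - a = t • (xstar - a) := by rw [hy]; module
      rw [h1, norm_smul, Real.norm_eq_abs, mul_pow, sq_abs, norm_sub_rev]
    have hcm : 0 ≤ c - μ / 2 := by
      rw [hc]
      rw [le_sub_iff_add_le, zero_add, div_le_div_iff₀ (by norm_num : (0:ℝ) < 2) (by linarith : (0:ℝ) < 2 * lam)]
      nlinarith [hlamL', mul_le_mul_of_nonneg_left hμL hlam.le]
    have hΔ0 : 0 ≤ F a - F xstar := by linarith [hmin a]
    have hga := hgrow a
    -- key at y
    have hk := hkey k y
    rw [hya] at hk
    have hN : ‖a - xstar‖ ^ 2 ≤ 2 / μ * (F a - F xstar) := by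
      rw [div_mul_eq_mul_div, le_div_iff₀ hμ]
      nlinarith [hga]
    have hbound : F b - F xstar ≤
        (1 - t) * (F a - F xstar) + (c - μ / 2) * t ^ 2 * (2 / μ) * (F a - F xstar) := by
      have h5 : (c - μ / 2) * (t ^ 2 * ‖a - xstar‖ ^ 2) ≤
          (c - μ / 2) * (t ^ 2 * (2 / μ * (F a - F xstar))) := by
        apply mul_le_mul_of_nonneg_left _ hcm
        exact mul_le_mul_of_nonneg_left hN (sq_nonneg t)
      nlinarith [hk, hFy, sq_nonneg ‖y - b‖, mul_nonneg hc0.le (sq_nonneg ‖y - b‖), h5]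
    -- coefficient inequality
    have hcμ : (c - μ / 2) * (2 / μ) = (1 - m) / m := by
      rw [hc, hm]
      field_simp
    have hco : (1 + m / 4) * ((1 - t) + (1 - m) / m * t ^ 2) ≤ 1 := by
      have hmne : m ≠ 0 := ne_of_gt hm0
      have h2mne : (2 - m) ≠ 0 := ne_of_gt h2m
      have heq : (1 + m / 4) * ((1 - t) + (1 - m) / m * t ^ 2) - 1
          = (m ^ 3 - 5 * m ^ 2) / (4 * (2 - m) ^ 2) := by
        rw [ht]; field_simp; ring
      have hnum : m ^ 3 - 5 * m ^ 2 ≤ 0 := by nlinarith [sq_nonneg m]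
      have hfrac : (m ^ 3 - 5 * m ^ 2) / (4 * (2 - m) ^ 2) ≤ 0 :=
        div_nonpos_of_nonpos_of_nonneg hnum (by positivity)
      rw [← heq] at hfrac
      linarith
    have hrw : (1 - t) * (F a - F xstar) + (c - μ / 2) * t ^ 2 * (2 / μ) * (F a - F xstar)
        = ((1 - t) + (1 - m) / m * t ^ 2) * (F a - F xstar) := by
      rw [mul_assoc (c - μ/2), mul_comm (t^2), ← mul_assoc (c - μ/2), hcμ]
      ring
    rw [hrw] at hbound
    have hpos : (0:ℝ) < 1 + m / 4 := by linarith
    calc (1 + m / 4) * (F b - F xstar)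
        ≤ (1 + m / 4) * (((1 - t) + (1 - m) / m * t ^ 2) * (F a - F xstar)) :=
          mul_le_mul_of_nonneg_left hbound hpos.le
      _ = ((1 + m / 4) * ((1 - t) + (1 - m) / m * t ^ 2)) * (F a - F xstar) := by ring
      _ ≤ 1 * (F a - F xstar) := mul_le_mul_of_nonneg_right hco hΔ0
      _ = F a - F xstar := one_mul _
  -- conclude by induction
  have hpos : (0:ℝ) < 1 + m / 4 := by linarith
  have hrate : ∀ k, F (x (k + 1)) - F xstar ≤ (1 + m / 4)⁻¹ * (F (x k) - F xstar) := by
    intro k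
    have h1 := mul_le_mul_of_nonneg_left (hstep k) (inv_nonneg.mpr hpos.le)
    rwa [← mul_assoc, inv_mul_cancel₀ hpos.ne', one_mul] at h1
  suffices h : ∀ n : ℕ, F (x n) - F xstar ≤ (1 + m / 4)⁻¹ ^ n * (F (x 0) - F xstar) by
    intro n _
    have := h n
    rw [hm] at this
    exact this
  intro n
  induction n with
  | zero => simp
  | succ n ih =>
    calc F (x (n + 1)) - F xstar ≤ (1 + m / 4)⁻¹ * (F (x n) - F xstar) := hrate n
      _ ≤ (1 + m / 4)⁻¹ * ((1 + m / 4)⁻¹ ^ n * (F (x 0) - F xstar)) :=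
          mul_le_mul_of_nonneg_left ih (inv_nonneg.mpr hpos.le)
      _ = (1 + m / 4)⁻¹ ^ (n + 1) * (F (x 0) - F xstar) := by ring
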